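/- Let 0 < p < 1 be a real number, let N ≥ 3, and let r : {1,…,N} → ℝ be nondecreasing (r₁ ≤ r₂ ≤ ⋯ ≤ r_N). For a permutation σ of {1,…,N}, define the Hamiltonian-cycle cost E(σ) = Σ_{i=1}^{N} |r_{σ(i+1)} − r_{σ(i)}|^p, where indices are taken cyclically (σ(N+1) := σ(1)). Then for every permutation σ, E(σ) ≥ Σ_{i=1}^{N−1} (r_{i+1} − r_i)^p + (r_N − r_1)^p; that is, the cycle visiting the points in increasing order and returning from the last point to the first is an optimal traveling-salesman tour on the complete graph with weights |r_i − r_j|^p. -/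

import Mathlib

open List

/-- edge weight -/
noncomputable def wc (p a b : ℝ) : ℝ := |b - a| ^ p

lemma wc_symm (p a b : ℝ) : wc p a b = wc p b a := by
  simp [wc, abs_sub_comm]

lemma wc_eq {a b : ℝ} (p : ℝ) (h : a ≤ b) : wc p a b = (b - a) ^ p := by
  rw [wc, abs_of_nonneg (by linarith)]

/-- cost of a path visiting the list in order -/
noncomputable def pathCost (p : ℝ) : List ℝ → ℝ
  | [] => 0
  | [_] => 0
  | a :: b :: t => wc p a b + pathCost p (b :: t)

/-- cost of the closed cycle through the list -/
noncomputable def cycleCost (p : ℝ) : List ℝ → ℝ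
  | [] => 0
  | a :: t => pathCost p (a :: t) + wc p (t.getLastD a) a

lemma pathCost_append (p a x : ℝ) (l : List ℝ) :
    pathCost p ((a :: l) ++ [x]) = pathCost p (a :: l) + wc p (l.getLastD a) x := by
  induction l generalizing a with
  | nil => simp [pathCost]
  | cons b l ih =>
      show pathCost p (a :: ((b :: l) ++ [x])) = _
      rw [show (a :: ((b :: l) ++ [x])) = a :: b :: (l ++ [x]) from rfl]
      rw [show pathCost p (a :: b :: (l ++ [x]))
            = wc p a b + pathCost p (b :: (l ++ [x])) from rfl]
      rw [show (b :: (l ++ [x])) = (b :: l) ++ [x] from rfl, ih b]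
      rw [show pathCost p (a :: b :: l) = wc p a b + pathCost p (b :: l) from rfl,
        List.getLastD_cons]
      ring

lemma cycleCost_rotate_one (p : ℝ) (l : List ℝ) :
    cycleCost p (l.rotate 1) = cycleCost p l := by
  cases l with
  | nil => simp
  | cons a t =>
    rw [show (a :: t).rotate 1 = t ++ [a] by simpa using List.rotate_cons_succ t a 0]
    cases t with
    | nil => simp
    | cons b t' =>
      show cycleCost p (b :: (t' ++ [a])) = cycleCost p (a :: b :: t')
      simp only [cycleCost, List.getLastD_concat, List.getLastD_cons]
      rw [show (b :: (t' ++ [a])) = (b :: t') ++ [a] from rfl, pathCost_append]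
      rw [show pathCost p (a :: b :: t') = wc p a b + pathCost p (b :: t') from rfl]
      rw [wc_symm p a b]
      ring

lemma cycleCost_rotate (p : ℝ) (l : List ℝ) (k : ℕ) :
    cycleCost p (l.rotate k) = cycleCost p l := by
  induction k with
  | zero => simp
  | succ k ih => rw [← List.rotate_rotate, cycleCost_rotate_one, ih]

lemma exists_head (p : ℝ) (l : List ℝ) {x : ℝ} (hx : x ∈ l) :
    ∃ t, (x :: t).Perm l ∧ cycleCost p (x :: t) = cycleCost p l := by
  obtain ⟨s, t2, rfl⟩ := List.append_of_mem hx
  have hrot : (s ++ x :: t2).rotate s.length = x :: (t2 ++ s) := by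
    rw [List.rotate_append_length_eq]
    simp
  refine ⟨t2 ++ s, ?_, ?_⟩
  · rw [← hrot]; exact List.rotate_perm _ _
  · rw [← hrot]; exact cycleCost_rotate _ _ _

lemma sorted_headI_le {m : List ℝ} (hs : List.Pairwise (· ≤ ·) m) {e : ℝ} (he : e ∈ m) :
    m.headI ≤ e := by
  cases m with
  | nil => simp at he
  | cons d t =>
    rcases List.mem_cons.mp he with rfl | h
    · simp
    · simpa using (List.pairwise_cons.mp hs).1 e h

lemma sorted_le_getLastD : ∀ {t : List ℝ} {d e : ℝ},
    List.Pairwise (· ≤ ·) (d :: t) → e ∈ d :: t → e ≤ t.getLastD d := by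
  intro t
  induction t with
  | nil => intro d e _ he; simp at he; simp [he]
  | cons c s ih =>
    intro d e hs he
    rw [List.getLastD_cons]
    rcases List.mem_cons.mp he with rfl | h
    · exact (List.pairwise_cons.mp hs).1 _ (List.getLastD_mem_cons (l := s) (a := c))
    · exact ih hs.of_cons h

lemma rpow_shift {p : ℝ} (hp0 : 0 < p) (hp1 : p < 1) {s s' L : ℝ}
    (hs : 0 ≤ s) (hss : s ≤ s') (hL : 0 ≤ L) :
    (s' + L) ^ p + s ^ p ≤ (s + L) ^ p + s' ^ p := by
  rcases eq_or_lt_of_le (show s ≤ s' + L by linarith) with heq | hlt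
  · rw [show s' = s by linarith, show L = 0 by linarith]
  · have hTpos : (0:ℝ) < s' + L - s := by linarith
    have hTne : s' + L - s ≠ 0 := ne_of_gt hTpos
    have hc := Real.concaveOn_rpow hp0.le hp1.le
    have hmem1 : s ∈ Set.Ici (0 : ℝ) := hs
    have hmem2 : s' + L ∈ Set.Ici (0 : ℝ) := by
      simp only [Set.mem_Ici]; linarith
    have hα : (0:ℝ) ≤ (s' - s) / (s' + L - s) := div_nonneg (by linarith) hTpos.le
    have hβ : (0:ℝ) ≤ L / (s' + L - s) := div_nonneg hL hTpos.le
    have hsum : (s' - s) / (s' + L - s) + L / (s' + L - s) = 1 := by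
      field_simp
      ring
    have h1 := hc.2 hmem1 hmem2 hα hβ hsum
    have h2 := hc.2 hmem1 hmem2 hβ hα (by linarith)
    have e1 : ((s' - s) / (s' + L - s)) • s + (L / (s' + L - s)) • (s' + L) = s + L := by
      simp only [smul_eq_mul]
      field_simp
      ring
    have e2 : (L / (s' + L - s)) • s + ((s' - s) / (s' + L - s)) • (s' + L) = s' := by
      simp only [smul_eq_mul]
      field_simp
      ring
    rw [e1] at h1
    rw [e2] at h2
    simp only [smul_eq_mul] at h1 h2
    have expand : (s' + L) ^ p + s ^ p =
        ((s' - s) / (s' + L - s) * s ^ p + L / (s' + L - s) * (s' + L) ^ p)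
          + (L / (s' + L - s) * s ^ p + (s' - s) / (s' + L - s) * (s' + L) ^ p) := by
      linear_combination (s ^ p + (s' + L) ^ p) * hsum.symm
    rw [expand]
    exact add_le_add h1 h2

lemma key_ineq {p : ℝ} (hp0 : 0 < p) (hp1 : p < 1) {h a b y x : ℝ}
    (hha : h ≤ a) (hab : a ≤ b) (hby : b ≤ y) (hyx : y ≤ x) :
    (x - y) ^ p + (x - h) ^ p - (y - h) ^ p ≤ (x - a) ^ p + (x - b) ^ p - (b - a) ^ p := by
  have m1 : (x - y) ^ p ≤ (x - b) ^ p :=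
    Real.rpow_le_rpow (by linarith) (by linarith) hp0.le
  have m2 : (b - a) ^ p ≤ (y - a) ^ p :=
    Real.rpow_le_rpow (by linarith) (by linarith) hp0.le
  have step2 : (x - h) ^ p - (y - h) ^ p ≤ (x - a) ^ p - (y - a) ^ p := by
    have hsh := rpow_shift hp0 hp1 (s := y - a) (s' := y - h) (L := x - y)
      (by linarith) (by linarith) (by linarith)
    have e1 : y - h + (x - y) = x - h := by ring
    have e2 : y - a + (x - y) = x - a := by ring
    rw [e1, e2] at hsh
    linarith
  linarith

lemma main_ineq (p : ℝ) (hp0 : 0 < p) (hp1 : p < 1) :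
    ∀ n, 3 ≤ n → ∀ m l : List ℝ, m.length = n → List.Pairwise (· ≤ ·) m → l.Perm m →
      cycleCost p m ≤ cycleCost p l := by
  intro n hn
  induction n, hn using Nat.le_induction with
  | base =>
    intro m l hlen hs hpl
    obtain ⟨u, v, xx, rfl⟩ : ∃ u v xx, m = [u, v, xx] := by
      rcases m with _ | ⟨u, m⟩
      · simp at hlen
      rcases m with _ | ⟨v, m⟩
      · simp at hlen
      rcases m with _ | ⟨xx, m⟩
      · simp at hlen
      rcases m with _ | ⟨c, m⟩
      · exact ⟨u, v, xx, rfl⟩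
      · simp at hlen
    have hx_mem : xx ∈ l := (hpl.mem_iff).mpr (by simp)
    obtain ⟨t, hpt, hct⟩ := exists_head p l hx_mem
    have htuv : t.Perm [u, v] :=
      ((hpt.trans hpl).trans (List.perm_append_singleton xx [u, v])).cons_inv
    have hlt : t.length = 2 := by simpa using htuv.length_eq
    obtain ⟨a, b, rfl⟩ : ∃ a b, t = [a, b] := by
      rcases t with _ | ⟨a, t⟩
      · simp at hlt
      rcases t with _ | ⟨b, t⟩
      · simp at hlt
      rcases t with _ | ⟨c, t⟩
      · exact ⟨a, b, rfl⟩
      · simp at hlt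
    rw [← hct]
    have hcyc : ∀ α β γ : ℝ, cycleCost p [α, β, γ] = wc p α β + wc p β γ + wc p γ α := by
      intro α β γ
      simp only [cycleCost, pathCost, List.getLastD_cons, List.getLastD_nil]
      ring
    have hmem : a ∈ [u, v] := htuv.subset (by simp)
    rcases List.mem_cons.mp hmem with h1 | hmem2
    · have h2 : b = v := by
        have h3 : ([b] : List ℝ).Perm [v] := by
          have h4 := htuv
          rw [h1] at h4
          exact h4.cons_inv
        simpa [List.perm_singleton] using h3
      rw [hcyc, hcyc, h1, h2]
      exact le_of_eq (by ring)
    · have h1 : a = v := by simpa using hmem2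
      have h2 : b = u := by
        have h3 : ([a, b] : List ℝ).Perm [v, u] := htuv.trans (List.Perm.swap u v []).symm
        rw [h1] at h3
        simpa [List.perm_singleton] using h3.cons_inv
      rw [hcyc, hcyc, h1, h2]
      rw [wc_symm p xx v, wc_symm p v u, wc_symm p u xx]
      exact le_of_eq (by ring)
  | succ n hn ih =>
    intro m l hlen hs hpl
    rcases m with _ | ⟨d, rest⟩
    · simp at hlen
    have hrne : rest ≠ [] := by
      intro h; rw [h] at hlen; simp at hlen; omega
    set x := rest.getLast hrne with hxdef
    set mid := rest.dropLast with hmiddef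
    have hrest : mid ++ [x] = rest := List.dropLast_append_getLast hrne
    have hmidlen : mid.length + 1 = rest.length := by
      have := congrArg List.length hrest
      simpa using this
    have hrestlen : rest.length = n := by simp at hlen; omega
    have hm'sorted : List.Pairwise (· ≤ ·) (d :: mid) := by
      apply List.Pairwise.sublist _ hs
      exact List.cons_sublist_cons.mpr (by rw [← hrest]; exact (mid.sublist_append_left [x]))
    have hx_mem : x ∈ l := by
      apply (hpl.mem_iff).mpr
      exact List.mem_cons_of_mem d (rest.getLast_mem hrne)
    obtain ⟨t, hpt, hct⟩ := exists_head p l hx_mem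
    have hmeq : (d :: rest) = (d :: mid) ++ [x] := by
      rw [cons_append, hrest]
    have htm' : t.Perm (d :: mid) := by
      have h1 : (x :: t).Perm (x :: (d :: mid)) := by
        refine (hpt.trans hpl).trans ?_
        rw [hmeq]
        exact List.perm_append_singleton x (d :: mid)
      exact h1.cons_inv
    rcases t with _ | ⟨c, t''⟩
    · exfalso
      have := htm'.length_eq
      simp at this
    set a := t''.getLastD c with hadef
    set y := mid.getLastD d with hydef
    have ha_mem : a ∈ (d :: mid) := htm'.subset (List.getLastD_mem_cons (l := t'') (a := c))
    have hc_mem : c ∈ (d :: mid) := htm'.subset (by simp)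
    have hda : d ≤ a := sorted_headI_le hm'sorted ha_mem
    have hdc : d ≤ c := sorted_headI_le hm'sorted hc_mem
    have hay : a ≤ y := sorted_le_getLastD hm'sorted ha_mem
    have hcy : c ≤ y := sorted_le_getLastD hm'sorted hc_mem
    have hy_mem : y ∈ (d :: mid) := List.getLastD_mem_cons (l := mid) (a := d)
    have hyx : y ≤ x := by
      have hy_mem2 : y ∈ d :: rest := by
        rcases List.mem_cons.mp hy_mem with h | h
        · simp [h]
        · exact List.mem_cons_of_mem d (by rw [← hrest]; exact List.mem_append_left _ h)
      have h3 := sorted_le_getLastD hs hy_mem2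
      rwa [← hrest, List.getLastD_concat] at h3
    have e_l : cycleCost p l = cycleCost p (c :: t'')
        + (wc p x c + wc p a x - wc p a c) := by
      rw [← hct]
      show pathCost p (x :: c :: t'') + wc p ((c :: t'').getLastD x) x = _
      rw [show pathCost p (x :: c :: t'') = wc p x c + pathCost p (c :: t'') from rfl,
        List.getLastD_cons, ← hadef]
      show _ = pathCost p (c :: t'') + wc p (t''.getLastD c) c + (wc p x c + wc p a x - wc p a c)
      rw [← hadef]
      ring
    have e_m : cycleCost p (d :: rest) = cycleCost p (d :: mid)
        + (wc p y x + wc p x d - wc p y d) := by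
      rw [hmeq]
      have h4 : cycleCost p ((d :: mid) ++ [x])
          = pathCost p ((d :: mid) ++ [x]) + wc p ((mid ++ [x]).getLastD d) d := rfl
      have h5 : cycleCost p (d :: mid) = pathCost p (d :: mid) + wc p (mid.getLastD d) d := rfl
      rw [h4, h5, pathCost_append, List.getLastD_concat, ← hydef]
      ring
    have hIH : cycleCost p (d :: mid) ≤ cycleCost p (c :: t'') := by
      apply ih (d :: mid) (c :: t'') _ hm'sorted htm'
      have := htm'.length_eq
      simp at this ⊢
      omega
    have hkey : wc p y x + wc p x d - wc p y d ≤ wc p x c + wc p a x - wc p a c := by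
      have hdy : d ≤ y := le_trans hda hay
      have hax : a ≤ x := le_trans hay hyx
      have hcx : c ≤ x := le_trans hcy hyx
      have hdx : d ≤ x := le_trans hdy hyx
      rw [wc_eq p hyx, wc_symm p x d, wc_eq p hdx, wc_symm p y d, wc_eq p hdy,
        wc_symm p x c, wc_eq p hcx, wc_eq p hax]
      rcases le_total a c with hac | hca
      · rw [wc_eq p hac]
        have := key_ineq hp0 hp1 hda hac hcy hyx
        linarith
      · rw [wc_symm p a c, wc_eq p hca]
        have := key_ineq hp0 hp1 hdc hca hay hyx
        linarith
    linarith

lemma headI_ofFn {k : ℕ} (g : Fin (k + 1) → ℝ) : (List.ofFn g).headI = g 0 := by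
  rw [List.ofFn_succ]; rfl

lemma pathCost_cons (p a : ℝ) {l : List ℝ} (h : l ≠ []) :
    pathCost p (a :: l) = wc p a l.headI + pathCost p l := by
  rcases l with _ | ⟨b, t⟩
  · exact absurd rfl h
  · rfl

lemma pathCost_ofFn (p : ℝ) : ∀ (k : ℕ) (g : Fin (k + 1) → ℝ),
    pathCost p (List.ofFn g) = ∑ i : Fin k, wc p (g i.castSucc) (g i.succ) := by
  intro k
  induction k with
  | zero => intro g; simp [List.ofFn_succ, pathCost]
  | succ k ih =>
    intro g
    rw [List.ofFn_succ]
    rw [pathCost_cons p _ (by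
      intro h
      have := congrArg List.length h
      simp at this)]
    rw [ih (fun j => g j.succ), headI_ofFn (fun j => g j.succ)]
    rw [Fin.sum_univ_succ]
    simp only [Fin.succ_castSucc, Fin.castSucc_zero, Fin.succ_zero_eq_one]

lemma getLastD_ofFn : ∀ (k : ℕ) (g : Fin (k + 1) → ℝ) (d : ℝ),
    (List.ofFn g).getLastD d = g (Fin.last k) := by
  intro k
  induction k with
  | zero => intro g d; simp [List.ofFn_succ]
  | succ k ih =>
    intro g d
    rw [List.ofFn_succ, List.getLastD_cons, ih (fun i => g i.succ) (g 0)]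
    show g (Fin.last k).succ = g (Fin.last (k + 1))
    rw [Fin.succ_last]

lemma cycleCost_ofFn (p : ℝ) (k : ℕ) (g : Fin (k + 1) → ℝ) :
    cycleCost p (List.ofFn g) =
      (∑ i : Fin k, wc p (g i.castSucc) (g i.succ)) + wc p (g (Fin.last k)) (g 0) := by
  have h1 : cycleCost p (List.ofFn g) = pathCost p (List.ofFn g)
      + wc p ((List.ofFn fun i : Fin k => g i.succ).getLastD (g 0)) (g 0) := by
    rw [List.ofFn_succ]
    rfl
  have h2 : (List.ofFn fun i : Fin k => g i.succ).getLastD (g 0) = g (Fin.last k) := by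
    cases k with
    | zero => simp
    | succ j =>
      rw [getLastD_ofFn j (fun i => g i.succ) (g 0)]
      show g (Fin.last j).succ = g (Fin.last (j + 1))
      rw [Fin.succ_last]
  rw [h1, h2, pathCost_ofFn]

/-- For `0 < p < 1` and ordered points `r 0 ≤ r 1 ≤ ⋯ ≤ r (N-1)` on the line, the
Hamiltonian cycle visiting the points in increasing order (and returning from the last
point to the first) is an optimal traveling-salesman tour for weights `|rᵢ - rⱼ|^p`. -/
theorem stmt_5 (N : ℕ) (hN : 3 ≤ N) (p : ℝ) (hp0 : 0 < p) (hp1 : p < 1)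
    (r : Fin N → ℝ) (hr : Monotone r) (σ : Equiv.Perm (Fin N)) :
    (∑ i : Fin (N - 1), (r ⟨i.1 + 1, by have := i.2; omega⟩ - r ⟨i.1, by have := i.2; omega⟩) ^ p)
        + (r ⟨N - 1, by omega⟩ - r ⟨0, by omega⟩) ^ p
    ≤ ∑ i : Fin N, |r (σ ⟨(i.1 + 1) % N, Nat.mod_lt _ (by omega)⟩) - r (σ i)| ^ p := by
  obtain ⟨n, rfl⟩ : ∃ n, N = n + 1 := ⟨N - 1, by omega⟩
  have hMs : (List.ofFn r).Pairwise (· ≤ ·) := List.pairwise_ofFn.mpr (fun i j h => hr h.le)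
  have hmain := main_ineq p hp0 hp1 (n + 1) (by omega) (List.ofFn r)
      (List.ofFn (r ∘ σ)) (by simp) hMs (σ.ofFn_comp_perm r)
  rw [cycleCost_ofFn, cycleCost_ofFn] at hmain
  refine le_trans (le_of_eq ?_) (le_trans hmain (le_of_eq ?_))
  · congr 1
    · refine Finset.sum_congr rfl fun i _ => ?_
      rw [wc_eq p (hr (Fin.castSucc_lt_succ (i := i)).le)]
      rfl
    · rw [wc_symm p (r (Fin.last n)) (r 0), wc_eq p (hr (Fin.zero_le _))]
      rfl
  · rw [Fin.sum_univ_castSucc]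
    congr 1
    · refine Finset.sum_congr rfl fun i _ => ?_
      have h2 : (⟨((i.castSucc : ℕ) + 1) % (n + 1),
          Nat.mod_lt _ (by omega)⟩ : Fin (n + 1)) = i.succ := by
        apply Fin.ext
        have hlt : (i.castSucc : ℕ) + 1 < n + 1 := by
          have := i.isLt
          rw [Fin.coe_castSucc]
          omega
        simp [Nat.mod_eq_of_lt hlt]
      rw [h2]
      rfl
    · have h3 : (⟨((Fin.last n : ℕ) + 1) % (n + 1),
          Nat.mod_lt _ (by omega)⟩ : Fin (n + 1)) = (0 : Fin (n + 1)) := by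
        apply Fin.ext
        simp
      rw [h3]
      rfl
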